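/- The coinductive fixpoint (accepting all run-trees) and the inductive fixpoint (accepting only run-trees with no infinite branch) of the relation g = {(([],[a]),a), (([x],[a]),a)} : §X ⊗ §A → A with A = {a}, X = {x} differ: the inductive fixpoint is the empty relation, while the coinductive fixpoint contains the pair ([x,x,…], a), where [x,x,…] is the multiset containing x with multiplicity ∞. -/

import Mathlib

open Classical

/-- `§A`: finite-or-countable multisets over `A`. -/
def SMul' (A : Type) := {m : A → ℕ∞ // Set.Countable {a | m a ≠ 0}}

/-- A (possibly infinite, countably-branching) tree of nodes labelled in `X ⊎ A`. -/
structure PreTree (X A : Type) where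
  dom : Set (List ℕ)
  label : List ℕ → X ⊕ A

/-- A node is a leaf when it has no children. -/
def PreTree.isLeaf {X A : Type} (t : PreTree X A) (u : List ℕ) : Prop :=
  u ∈ t.dom ∧ ∀ n : ℕ, u ++ [n] ∉ t.dom

/-- The multiset of `X`-labels among the children of `u`. -/
noncomputable def PreTree.countX {X A : Type} (t : PreTree X A) (u : List ℕ) (x : X) : ℕ∞ :=
  ⨆ s : Finset ℕ,
    ((s.filter fun n => u ++ [n] ∈ t.dom ∧ t.label (u ++ [n]) = Sum.inl x).card : ℕ∞)

/-- The multiset of `A`-labels among the children of `u`. -/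
noncomputable def PreTree.countA {X A : Type} (t : PreTree X A) (u : List ℕ) (c : A) : ℕ∞ :=
  ⨆ s : Finset ℕ,
    ((s.filter fun n => u ++ [n] ∈ t.dom ∧ t.label (u ++ [n]) = Sum.inr c).card : ℕ∞)

/-- `t` is a run-tree of the relation `f : §X ⊗ §A ⊸ A` rooted at `a`. -/
def isRunTree {X A : Type} (f : Set ((SMul' X × SMul' A) × A)) (a : A)
    (t : PreTree X A) : Prop :=
  [] ∈ t.dom ∧ t.label [] = Sum.inr a ∧
  (∀ (u : List ℕ) (n : ℕ), u ++ [n] ∈ t.dom → u ∈ t.dom) ∧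
  (∀ u ∈ t.dom, ∀ x, t.label u = Sum.inl x → t.isLeaf u) ∧
  (∀ u ∈ t.dom, ∀ b, t.label u = Sum.inr b →
    ∃ (hX : Set.Countable {x | t.countX u x ≠ 0})
      (hA : Set.Countable {c | t.countA u c ≠ 0}),
      ((⟨t.countX u, hX⟩, ⟨t.countA u, hA⟩), b) ∈ f)

/-- The multiset of `X`-labels at the leaves of `t`. -/
noncomputable def leafCountX {X A : Type} (t : PreTree X A) (x : X) : ℕ∞ :=
  ⨆ s : Finset (List ℕ),
    ((s.filter fun u => t.isLeaf u ∧ t.label u = Sum.inl x).card : ℕ∞)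

/-- `t` has no infinite branch. -/
def noInfiniteBranch {X A : Type} (t : PreTree X A) : Prop :=
  ¬ ∃ b : ℕ → ℕ, ∀ n : ℕ, ((List.range n).map b) ∈ t.dom

/-- The inductive fixpoint: only run-trees with no infinite branch are accepted. -/
def Yind {X A : Type} (f : Set ((SMul' X × SMul' A) × A)) : Set (SMul' X × A) :=
  {p | ∃ t : PreTree X A, isRunTree f p.2 t ∧ noInfiniteBranch t ∧
        ∀ x, p.1.val x = leafCountX t x}

/-- The coinductive fixpoint: all run-trees are accepted. -/
def Ycoind {X A : Type} (f : Set ((SMul' X × SMul' A) × A)) : Set (SMul' X × A) :=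
  {p | ∃ t : PreTree X A, isRunTree f p.2 t ∧ ∀ x, p.1.val x = leafCountX t x}

/-- The empty multiset over `Unit`. -/
def zeroM : SMul' Unit := ⟨fun _ => 0, Set.to_countable _⟩

/-- The singleton multiset over `Unit`. -/
def oneM : SMul' Unit := ⟨fun _ => 1, Set.to_countable _⟩

/-- The multiset `[x,x,…]` containing `x` with multiplicity `∞`. -/
def topM : SMul' Unit := ⟨fun _ => ⊤, Set.to_countable _⟩

/-- The relation `g = {(([],[a]),a), (([x],[a]),a)} : §X ⊗ §A → A` with `A = {a}`,
`X = {x}` (both represented by `Unit`). -/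
def gEx : Set ((SMul' Unit × SMul' Unit) × Unit) :=
  {((zeroM, oneM), ()), ((oneM, oneM), ())}


section Aux

open Classical

lemma supCard_eq_zero {I : Type} (P : I → Prop) {dp : DecidablePred P} (h : ∀ i, ¬ P i) :
    (⨆ s : Finset I, ((s.filter P).card : ℕ∞)) = 0 := by
  have he : ∀ s : Finset I, s.filter P = ∅ := fun s =>
    Finset.filter_eq_empty_iff.mpr (fun {i} _ => h i)
  simp [he]

lemma supCard_eq_one {I : Type} (P : I → Prop) {dp : DecidablePred P} (k : I) (h : ∀ i, P i ↔ i = k) :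
    (⨆ s : Finset I, ((s.filter P).card : ℕ∞)) = 1 := by
  apply le_antisymm
  · apply iSup_le; intro s
    have hsub : s.filter P ⊆ {k} := by
      intro i hi
      simp only [Finset.mem_filter] at hi
      simp [(h i).mp hi.2]
    have hc : (s.filter P).card ≤ 1 := (Finset.card_le_card hsub).trans (by simp)
    exact_mod_cast Nat.cast_le.mpr hc
  · have hfk : (({k} : Finset I).filter P) = {k} := by
      apply Finset.filter_eq_self.mpr
      intro i hi
      rw [Finset.mem_singleton] at hi
      exact (h i).mpr hi
    calc (1 : ℕ∞) = ((({k} : Finset I).filter P).card : ℕ∞) := by simp [hfk]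
      _ ≤ _ := le_iSup (fun s : Finset I => ((s.filter P).card : ℕ∞)) ({k} : Finset I)

lemma supCard_eq_top {I : Type} (P : I → Prop) {dp : DecidablePred P} (h : {i | P i}.Infinite) :
    (⨆ s : Finset I, ((s.filter P).card : ℕ∞)) = ⊤ := by
  rw [eq_top_iff, ← ENat.iSup_natCast]
  apply iSup_le; intro n
  obtain ⟨s, hs, hc⟩ := h.exists_subset_card_eq n
  have hfs : s.filter P = s := Finset.filter_eq_self.mpr (fun i hi => hs hi)
  calc (n : ℕ∞) = ((s.filter P).card : ℕ∞) := by rw [hfs, hc]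
    _ ≤ _ := le_iSup (fun s : Finset I => ((s.filter P).card : ℕ∞)) s

/-! ### Part 1 machinery -/

lemma step_exists (t : PreTree Unit Unit) (ht : isRunTree gEx () t) :
    ∀ u, u ∈ t.dom → t.label u = Sum.inr () →
      ∃ k, u ++ [k] ∈ t.dom ∧ t.label (u ++ [k]) = Sum.inr () := by
  intro u hu hl
  obtain ⟨hX, hA, hmem⟩ := ht.2.2.2.2 u hu () hl
  have hA1 : t.countA u = oneM.val := by
    simp only [gEx, Set.mem_insert_iff, Set.mem_singleton_iff, Prod.mk.injEq] at hmem
    rcases hmem with ⟨h1, h2⟩ | ⟨h1, h2⟩ <;> exact congrArg (fun p => p.2.val) h1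
  have h1 : t.countA u () = 1 := congrFun hA1 ()
  by_contra hcon
  push_neg at hcon
  have h0 : t.countA u () = 0 := by
    rw [PreTree.countA]
    exact supCard_eq_zero (fun k => u ++ [k] ∈ t.dom ∧ t.label (u ++ [k]) = Sum.inr ()) (fun k hk => hcon k hk.1 hk.2)
  rw [h0] at h1
  exact absurd h1 (by norm_num)

noncomputable def seqB (t : PreTree Unit Unit) (ht : isRunTree gEx () t) :
    ℕ → {u : List ℕ // u ∈ t.dom ∧ t.label u = Sum.inr ()}
  | 0 => ⟨[], ht.1, ht.2.1⟩
  | n + 1 =>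
    ⟨(seqB t ht n).1 ++
        [Classical.choose (step_exists t ht (seqB t ht n).1 (seqB t ht n).2.1 (seqB t ht n).2.2)],
      (Classical.choose_spec
        (step_exists t ht (seqB t ht n).1 (seqB t ht n).2.1 (seqB t ht n).2.2)).1,
      (Classical.choose_spec
        (step_exists t ht (seqB t ht n).1 (seqB t ht n).2.1 (seqB t ht n).2.2)).2⟩

lemma run_has_infinite_branch (t : PreTree Unit Unit) (ht : isRunTree gEx () t) :
    ∃ b : ℕ → ℕ, ∀ n : ℕ, ((List.range n).map b) ∈ t.dom := by
  set b : ℕ → ℕ := fun n => ((seqB t ht (n + 1)).1).getLastD 0 with hb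
  have key : ∀ n, (List.range n).map b = (seqB t ht n).1 := by
    intro n
    induction n with
    | zero => simp [seqB]
    | succ n ih =>
      have hsucc : (seqB t ht (n + 1)).1 = (seqB t ht n).1 ++
          [Classical.choose
            (step_exists t ht (seqB t ht n).1 (seqB t ht n).2.1 (seqB t ht n).2.2)] := rfl
      have hbn : b n = Classical.choose
          (step_exists t ht (seqB t ht n).1 (seqB t ht n).2.1 (seqB t ht n).2.2) := by
        rw [hb]
        simp only
        rw [hsucc, List.getLastD_concat]
      rw [List.range_succ, List.map_append, ih, List.map_singleton, hbn, hsucc]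
  exact ⟨b, fun n => (key n) ▸ (seqB t ht n).2.1⟩

/-! ### Part 2 machinery -/

/-- The domain of the witness tree: paths `0^n` and `0^n ++ [1]`. -/
def domEx : Set (List ℕ) :=
  {u | ∃ n, u = List.replicate n 0 ∨ u = List.replicate n 0 ++ [1]}

/-- The witness run-tree. -/
def TEx : PreTree Unit Unit :=
  ⟨domEx, fun u => if (1 : ℕ) ∈ u then Sum.inl () else Sum.inr ()⟩

lemma one_not_mem_rep (n : ℕ) : (1 : ℕ) ∉ List.replicate n 0 := by
  simp [List.mem_replicate]

lemma dom_concat_cases {u : List ℕ} {k : ℕ} (h : u ++ [k] ∈ domEx) :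
    u = List.replicate u.length 0 ∧ (k = 0 ∨ k = 1) := by
  obtain ⟨n, hn | hn⟩ := h
  · have hall : ∀ b ∈ u ++ [k], b = 0 := by
      intro b hb
      rw [hn] at hb
      exact List.eq_of_mem_replicate hb
    have hu : u = List.replicate u.length 0 :=
      List.eq_replicate_of_mem (fun b hb => hall b (List.mem_append_left _ hb))
    have hk : k = 0 := hall k (List.mem_append_right _ (List.mem_singleton_self k))
    exact ⟨hu, Or.inl hk⟩
  · obtain ⟨hu, hk⟩ := List.append_inj' hn rfl
    have : u.length = n := by rw [hu]; simp
    refine ⟨by rw [this]; exact hu, Or.inr ?_⟩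
    simpa using hk
  
lemma rep_mem_dom (n : ℕ) : List.replicate n 0 ∈ domEx := ⟨n, Or.inl rfl⟩

lemma rep1_mem_dom (n : ℕ) : List.replicate n 0 ++ [1] ∈ domEx := ⟨n, Or.inr rfl⟩

lemma label_rep (n : ℕ) : TEx.label (List.replicate n 0) = Sum.inr () :=
  if_neg (one_not_mem_rep n)

lemma label_rep1 (n : ℕ) : TEx.label (List.replicate n 0 ++ [1]) = Sum.inl () :=
  if_pos (List.mem_append_right _ (List.mem_singleton_self 1))

lemma rep1_isLeaf (n : ℕ) : TEx.isLeaf (List.replicate n 0 ++ [1]) := by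
  refine ⟨rep1_mem_dom n, fun k hk => ?_⟩
  obtain ⟨heq, -⟩ := dom_concat_cases hk
  have h1 : (1 : ℕ) ∈ List.replicate n 0 ++ [1] :=
    List.mem_append_right _ (List.mem_singleton_self 1)
  rw [heq] at h1
  exact absurd (List.eq_of_mem_replicate h1) one_ne_zero

lemma TEx_run : isRunTree gEx () TEx := by
  refine ⟨rep_mem_dom 0, label_rep 0, ?_, ?_, ?_⟩
  · intro u k hk
    obtain ⟨heq, -⟩ := dom_concat_cases hk
    rw [heq]; exact rep_mem_dom _
  · intro u hu x hx
    obtain ⟨n, hn | hn⟩ := hu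
    · rw [hn, label_rep] at hx; exact absurd hx (by simp)
    · rw [hn]; exact rep1_isLeaf n
  · intro u hu b hb
    have hrep : u = List.replicate u.length 0 := by
      obtain ⟨n, hn | hn⟩ := hu
      · rw [hn]; simp
      · rw [hn, label_rep1] at hb; exact absurd hb (by simp)
    set n := u.length with hnl
    refine ⟨Set.to_countable _, Set.to_countable _, ?_⟩
    have hX1 : TEx.countX u = oneM.val := by
      funext x
      rw [PreTree.countX]
      have hone : oneM.val x = (1 : ℕ∞) := rfl
      rw [hone]
      refine supCard_eq_one
        (fun k => u ++ [k] ∈ TEx.dom ∧ TEx.label (u ++ [k]) = Sum.inl x) 1 ?_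
      intro k
      constructor
      · rintro ⟨hk, hlk⟩
        obtain ⟨-, h0 | h1⟩ := dom_concat_cases hk
        · exfalso
          rw [h0, hrep] at hlk
          rw [show List.replicate n 0 ++ [0] = List.replicate (n + 1) 0 by
            simp [List.replicate_succ']] at hlk
          rw [label_rep] at hlk
          exact absurd hlk (by simp)
        · exact h1
      · rintro rfl
        rw [hrep]
        exact ⟨rep1_mem_dom n, by rw [label_rep1]⟩
    have hA1 : TEx.countA u = oneM.val := by
      funext c
      rw [PreTree.countA]
      have hone : oneM.val c = (1 : ℕ∞) := rfl
      rw [hone]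
      refine supCard_eq_one
        (fun k => u ++ [k] ∈ TEx.dom ∧ TEx.label (u ++ [k]) = Sum.inr c) 0 ?_
      intro k
      constructor
      · rintro ⟨hk, hlk⟩
        obtain ⟨-, h0 | h1⟩ := dom_concat_cases hk
        · exact h0
        · exfalso
          rw [h1, hrep, label_rep1] at hlk
          exact absurd hlk (by simp)
      · rintro rfl
        rw [hrep]
        refine ⟨by
            rw [show List.replicate n 0 ++ [0] = List.replicate (n + 1) 0 by
              simp [List.replicate_succ']]
            exact rep_mem_dom _, ?_⟩
        rw [show List.replicate n 0 ++ [0] = List.replicate (n + 1) 0 by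
          simp [List.replicate_succ'], label_rep]
    have hx : (⟨TEx.countX u, Set.to_countable _⟩ : SMul' Unit) = oneM := Subtype.ext hX1
    have ha : (⟨TEx.countA u, Set.to_countable _⟩ : SMul' Unit) = oneM := Subtype.ext hA1
    rw [hx, ha]
    obtain ⟨⟩ := b
    exact Or.inr rfl

lemma TEx_leafCount (x : Unit) : leafCountX TEx x = ⊤ := by
  rw [leafCountX]
  refine supCard_eq_top (fun u => TEx.isLeaf u ∧ TEx.label u = Sum.inl x) ?_
  have hinj : Function.Injective (fun n : ℕ => List.replicate n 0 ++ [1]) := by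
    intro a b hab
    have := congrArg List.length hab
    simpa using this
  apply Set.infinite_of_injective_forall_mem hinj
  intro n
  obtain ⟨⟩ := x
  exact ⟨rep1_isLeaf n, label_rep1 n⟩

end Aux


/-- the inductive and coinductive fixpoints of `g` differ: the
inductive fixpoint is the empty relation, while the coinductive fixpoint contains
the pair `([x,x,…], a)`. -/
theorem inductive_coinductive_differ :
    Yind gEx = ∅ ∧ (topM, ()) ∈ Ycoind gEx := by
  constructor
  · ext p
    simp only [Set.mem_empty_iff_false, iff_false]
    rintro ⟨t, h1, h2, -⟩
    obtain ⟨m, a⟩ := p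
    obtain ⟨⟩ := a
    exact h2 (run_has_infinite_branch t h1)
  · refine ⟨TEx, TEx_run, fun x => ?_⟩
    rw [TEx_leafCount x]
    rfl
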